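/- Let G be a finite abelian group with uniform measure μ, f : G → [0,∞) a density, and δ > 0. Then Spec_δ(f) is covered by a set Λ ⊆ Ĝ of size at most 4 Ent_μ(f)/δ²: every γ ∈ Spec_δ(f) equals Σ_{λ∈Λ} ε_λ λ with ε_λ ∈ {−1,0,1} (Chang's theorem). -/

import Mathlib

open Finset Complex

lemma young_aux (a b : ℝ) (ha : 0 ≤ a) : a * b ≤ a * Real.log a + Real.exp b - a := by
  rcases eq_or_lt_of_le ha with h | h
  · simp [← h]; positivity
  · have h1 : b - Real.log a + 1 ≤ Real.exp (b - Real.log a) := Real.add_one_le_exp _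
    have h2 : Real.exp (b - Real.log a) = Real.exp b / a := by
      rw [Real.exp_sub, Real.exp_log h]
    nlinarith [mul_le_mul_of_nonneg_left (h2 ▸ h1) ha, mul_div_cancel₀ (Real.exp b) h.ne']

lemma exp_le_convex (s t : ℝ) (ht : 0 < t) (hs : |s| ≤ t) :
    Real.exp s ≤ Real.cosh t + s * (Real.sinh t / t) := by
  have h1 : -t ≤ s := (abs_le.1 hs).1
  have h2 : s ≤ t := (abs_le.1 hs).2
  have := convexOn_exp.2 (Set.mem_univ (-t)) (Set.mem_univ t)
    (show (0:ℝ) ≤ (t - s) / (2*t) by apply div_nonneg <;> linarith)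
    (show (0:ℝ) ≤ (t + s) / (2*t) by apply div_nonneg <;> linarith)
    (show (t - s) / (2*t) + (t + s) / (2*t) = 1 by field_simp; ring)
  have harg : ((t - s) / (2*t)) • (-t) + ((t + s) / (2*t)) • t = s := by
    simp only [smul_eq_mul]; field_simp; ring
  rw [harg, smul_eq_mul, smul_eq_mul] at this
  rw [Real.cosh_eq, Real.sinh_eq]
  calc Real.exp s ≤ (t - s) / (2*t) * Real.exp (-t) + (t + s) / (2*t) * Real.exp t := this
    _ = (Real.exp t + Real.exp (-t))/2 + s * ((Real.exp t - Real.exp (-t))/2 / t) := by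
        field_simp; ring

section rand
variable {G A : Type*} [Fintype G] [AddCommGroup A] [DecidableEq A]

lemma prod_u {ι : Type*} (u : A → G → ℂ)
    (hmul : ∀ γ γ' x, u (γ + γ') x = u γ x * u γ' x) (hone : ∀ x, u 0 x = 1)
    (s : Finset ι) (g : ι → A) (x : G) :
    ∏ i ∈ s, u (g i) x = u (∑ i ∈ s, g i) x := by
  classical
  induction s using Finset.cons_induction with
  | empty => simp [hone]
  | cons a s ha ih => rw [prod_cons, sum_cons, hmul, ih]

lemma rand_inner (u : A → G → ℂ)
    (hmul : ∀ γ γ' x, u (γ + γ') x = u γ x * u γ' x) (hone : ∀ x, u 0 x = 1)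
    (hconj : ∀ γ x, u (-γ) x = (starRingEnd ℂ) (u γ x))
    (horth : ∀ γ : A, γ ≠ 0 → ∑ x, u γ x = 0)
    (Λ : Finset A) (hΛ : AddDissociated (Λ : Set A))
    (d : A → ℂ) (t : Finset A) (ht : t ⊆ Λ) (htne : t ≠ ∅) :
    ∑ x, ∏ γ ∈ t, (d γ * u γ x + (starRingEnd ℂ) (d γ * u γ x)) = 0 := by
  simp_rw [Finset.prod_add, Finset.sum_comm (s := Finset.univ)]
  refine Finset.sum_eq_zero fun s hs ↦ ?_
  rw [Finset.mem_powerset] at hs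
  have key : ∀ x : G, (∏ γ ∈ s, d γ * u γ x) * ∏ γ ∈ t \ s, (starRingEnd ℂ) (d γ * u γ x)
      = ((∏ γ ∈ s, d γ) * ∏ γ ∈ t \ s, (starRingEnd ℂ) (d γ)) *
        u ((∑ γ ∈ s, γ) - ∑ γ ∈ t \ s, γ) x := by
    intro x
    have h1 : ∏ γ ∈ s, d γ * u γ x = (∏ γ ∈ s, d γ) * u (∑ γ ∈ s, γ) x := by
      rw [Finset.prod_mul_distrib, prod_u u hmul hone s (fun γ => γ) x]
    have h2 : ∏ γ ∈ t \ s, (starRingEnd ℂ) (d γ * u γ x)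
        = (∏ γ ∈ t \ s, (starRingEnd ℂ) (d γ)) * u (-∑ γ ∈ t \ s, γ) x := by
      simp_rw [map_mul, ← hconj]
      rw [Finset.prod_mul_distrib, prod_u u hmul hone (t \ s) (fun γ => -γ) x,
        Finset.sum_neg_distrib]
    rw [h1, h2, sub_eq_add_neg, hmul]
    ring
  simp_rw [key, ← Finset.mul_sum]
  have hne : (∑ γ ∈ s, γ) - ∑ γ ∈ t \ s, γ ≠ 0 := by
    rw [sub_ne_zero]
    intro heq
    have hs' : (s : Set A) ⊆ (Λ : Set A) := by
      exact_mod_cast hs.trans ht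
    have hts' : ((t \ s : Finset A) : Set A) ⊆ (Λ : Set A) := by
      exact_mod_cast (Finset.sdiff_subset).trans ht
    have hst := hΛ hs' hts' heq
    have hdisj : Disjoint s (t \ s) := Finset.disjoint_sdiff
    rw [← hst] at hdisj
    have h0 : s = ∅ := by simpa using disjoint_self.1 hdisj
    rw [h0, Finset.sdiff_empty] at hst
    exact htne hst.symm
  rw [horth _ hne, mul_zero]

lemma rand (u : A → G → ℂ)
    (hmul : ∀ γ γ' x, u (γ + γ') x = u γ x * u γ' x) (hone : ∀ x, u 0 x = 1)
    (hconj : ∀ γ x, u (-γ) x = (starRingEnd ℂ) (u γ x))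
    (horth : ∀ γ : A, γ ≠ 0 → ∑ x, u γ x = 0)
    (Λ : Finset A) (hΛ : AddDissociated (Λ : Set A)) (c : ℝ) (d : A → ℂ) :
    ∑ x, ∏ γ ∈ Λ, (c + (d γ * u γ x).re) = (Fintype.card G : ℝ) * c ^ Λ.card := by
  have h : ((∑ x, ∏ γ ∈ Λ, (c + (d γ * u γ x).re) : ℝ) : ℂ)
      = (((Fintype.card G : ℝ) * c ^ Λ.card : ℝ) : ℂ) := by
    push_cast
    calc (∑ x, ∏ γ ∈ Λ, ((c : ℂ) + ((d γ * u γ x).re : ℂ)))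
        = ∑ x, ∏ γ ∈ Λ, ((d γ * u γ x + (starRingEnd ℂ) (d γ * u γ x))/2 + (c:ℂ)) := by
          simp_rw [Complex.re_eq_add_conj, add_comm]
      _ = ∑ t ∈ Λ.powerset, (∑ x, ∏ γ ∈ t, (d γ * u γ x + (starRingEnd ℂ) (d γ * u γ x))/2)
            * ∏ _γ ∈ Λ \ t, (c : ℂ) := by
          simp_rw [Finset.prod_add, Finset.sum_mul]
          rw [Finset.sum_comm]
      _ = (∑ x : G, ∏ γ ∈ (∅ : Finset A), (d γ * u γ x + (starRingEnd ℂ) (d γ * u γ x))/2)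
            * ∏ _γ ∈ Λ \ ∅, (c : ℂ) := by
          refine Finset.sum_eq_single ∅ (fun t htp htne ↦ ?_) (by simp)
          rw [Finset.mem_powerset] at htp
          have h0 : ∑ x, ∏ γ ∈ t, (d γ * u γ x + (starRingEnd ℂ) (d γ * u γ x))/2 = 0 := by
            simp_rw [div_eq_mul_inv, Finset.prod_mul_distrib, Finset.prod_const,
              ← Finset.sum_mul]
            rw [rand_inner u hmul hone hconj horth Λ hΛ d t htp htne, zero_mul]
          rw [h0, zero_mul]
      _ = (Fintype.card G : ℂ) * (c:ℂ) ^ Λ.card := by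
          simp [Finset.card_univ, mul_comm]
  exact_mod_cast h

end rand

lemma chang_count
    {G A : Type*} [Fintype G] [Nonempty G] [AddCommGroup A] [Fintype A] [DecidableEq A]
    (u : A → G → ℂ)
    (hmul : ∀ γ γ' x, u (γ + γ') x = u γ x * u γ' x)
    (hone : ∀ x, u 0 x = 1)
    (hconj : ∀ γ x, u (-γ) x = (starRingEnd ℂ) (u γ x))
    (hnorm : ∀ γ x, ‖u γ x‖ = 1)
    (horth : ∀ γ : A, γ ≠ 0 → ∑ x, u γ x = 0)
    (f : G → ℝ) (hf0 : ∀ x, 0 ≤ f x)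
    (hf1 : (∑ x, f x) / (Fintype.card G) = 1)
    (δ : ℝ) (hδ : 0 < δ)
    (Λ : Finset A) (hdis : AddDissociated (Λ : Set A))
    (hspec : ∀ γ ∈ Λ, δ <
      ‖(∑ x, (f x : ℂ) * (starRingEnd ℂ) (u γ x)) / (Fintype.card G : ℂ)‖) :
    (Λ.card : ℝ) * δ ^ 2 ≤ 2 * ((∑ x, f x * Real.log (f x)) / (Fintype.card G)) := by
  set N : ℝ := (Fintype.card G : ℝ) with hNdef
  have hN : (0:ℝ) < N := by
    have := Fintype.card_pos (α := G); rw [hNdef]; exact_mod_cast this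
  have hsumf : ∑ x, f x = N := by
    field_simp at hf1; linarith [hf1]
  set fhat : A → ℂ := fun γ => (∑ x, (f x : ℂ) * (starRingEnd ℂ) (u γ x)) / (Fintype.card G : ℂ)
    with hfhat
  set d : A → ℂ := fun γ => (δ : ℂ) * fhat γ / ((‖fhat γ‖ : ℝ) : ℂ) with hd
  have hNne : ((Fintype.card G : ℂ)) ≠ 0 :=
    Nat.cast_ne_zero.mpr Fintype.card_ne_zero
  have habsd : ∀ γ ∈ Λ, ‖d γ‖ = δ := by
    intro γ hγ
    have hr : (0:ℝ) < ‖fhat γ‖ := lt_trans hδ (hspec γ hγ)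
    rw [hd]
    simp only [norm_div, norm_mul, Complex.norm_real, Real.norm_eq_abs]
    rw [abs_of_pos hr, abs_of_pos hδ]
    field_simp
  have hS : ∀ γ, ∑ x, (f x : ℂ) * u γ x = (Fintype.card G : ℂ) * (starRingEnd ℂ) (fhat γ) := by
    intro γ
    rw [hfhat]
    simp only [map_div₀, map_sum, map_mul, Complex.conj_conj, Complex.conj_ofReal, map_natCast]
    field_simp
  set g : G → ℝ := fun x => ∑ γ ∈ Λ, (d γ * u γ x).re with hg
  -- Step A
  have hA : ∑ x, f x * g x = ∑ γ ∈ Λ, N * (δ * ‖fhat γ‖) := by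
    rw [hg]
    simp only [Finset.mul_sum]
    rw [Finset.sum_comm]
    refine Finset.sum_congr rfl fun γ hγ => ?_
    have hr : (0:ℝ) < ‖fhat γ‖ := lt_trans hδ (hspec γ hγ)
    have hrne : ((‖fhat γ‖ : ℝ) : ℂ) ≠ 0 := by exact_mod_cast hr.ne'
    have hcalc : d γ * ((Fintype.card G : ℂ) * (starRingEnd ℂ) (fhat γ))
        = ((N * (δ * ‖fhat γ‖) : ℝ) : ℂ) := by
      rw [hd]
      have hsq : fhat γ * (starRingEnd ℂ) (fhat γ)
          = ((‖fhat γ‖ ^ 2 : ℝ) : ℂ) := by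
        rw [Complex.mul_conj, Complex.normSq_eq_norm_sq]
      rw [div_mul_eq_mul_div, div_eq_iff hrne,
        show (δ:ℂ) * fhat γ * ((Fintype.card G : ℂ) * (starRingEnd ℂ) (fhat γ))
          = (Fintype.card G : ℂ) * ((δ:ℂ) * (fhat γ * (starRingEnd ℂ) (fhat γ))) from by ring,
        hsq, hNdef]
      push_cast
      ring
    calc ∑ x, f x * (d γ * u γ x).re
        = ∑ x, ((f x : ℂ) * (d γ * u γ x)).re := by
          simp_rw [Complex.re_ofReal_mul]
      _ = ((∑ x, (f x : ℂ) * (d γ * u γ x))).re := by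
          rw [Complex.re_sum]
      _ = ((d γ * ∑ x, (f x : ℂ) * u γ x)).re := by
          rw [Finset.mul_sum]
          congr 1
          exact Finset.sum_congr rfl fun x _ => by ring
      _ = N * (δ * ‖fhat γ‖) := by
          rw [hS γ, hcalc, Complex.ofReal_re]
  have hA2 : N * ((Λ.card : ℝ) * δ ^ 2) ≤ ∑ x, f x * g x := by
    rw [hA]
    calc N * ((Λ.card : ℝ) * δ ^ 2) = ∑ _γ ∈ Λ, N * (δ * δ) := by
          rw [Finset.sum_const, nsmul_eq_mul]; ring
      _ ≤ ∑ γ ∈ Λ, N * (δ * ‖fhat γ‖) := by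
          refine Finset.sum_le_sum fun γ hγ => ?_
          have := (hspec γ hγ).le
          have h1 : δ * δ ≤ δ * ‖fhat γ‖ :=
            mul_le_mul_of_nonneg_left this hδ.le
          nlinarith [hN]
  -- Step C
  set d' : A → ℂ := fun γ => ((Real.sinh δ / δ : ℝ) : ℂ) * d γ with hd'
  have hC : ∑ x, Real.exp (g x) ≤ N * Real.cosh δ ^ Λ.card := by
    rw [← rand u hmul hone hconj horth Λ hdis (Real.cosh δ) d']
    refine Finset.sum_le_sum fun x _ => ?_
    rw [hg, Real.exp_sum]
    refine Finset.prod_le_prod (fun γ _ => (Real.exp_pos _).le) fun γ hγ => ?_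
    have h1 : |(d γ * u γ x).re| ≤ δ := by
      calc |(d γ * u γ x).re| ≤ ‖d γ * u γ x‖ := Complex.abs_re_le_norm _
        _ = δ := by rw [norm_mul, habsd γ hγ, hnorm, mul_one]
    have h2 := exp_le_convex _ δ hδ h1
    have h3 : (d' γ * u γ x).re = (d γ * u γ x).re * (Real.sinh δ / δ) := by
      rw [hd']
      simp only [mul_assoc, Complex.re_ofReal_mul]
      ring
    rw [h3]
    exact h2
  -- Step D : Young
  set C₀ : ℝ := (Λ.card : ℝ) * Real.log (Real.cosh δ) with hC₀
  have hexpC : Real.exp C₀ = Real.cosh δ ^ Λ.card := by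
    rw [hC₀, Real.exp_nat_mul, Real.exp_log (Real.cosh_pos δ)]
  have hcoshpow : (0:ℝ) < Real.cosh δ ^ Λ.card := pow_pos (Real.cosh_pos δ) _
  have h5 : ∑ x, Real.exp (g x - C₀) ≤ N := by
    simp_rw [Real.exp_sub, hexpC]
    rw [← Finset.sum_div, div_le_iff₀ hcoshpow]
    calc ∑ x, Real.exp (g x) ≤ N * Real.cosh δ ^ Λ.card := hC
      _ = N * Real.cosh δ ^ Λ.card := rfl
  have hsum := Finset.sum_le_sum fun x (_ : x ∈ (Finset.univ : Finset G)) =>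
    young_aux (f x) (g x - C₀) (hf0 x)
  have e1 : ∑ x, f x * (g x - C₀) = (∑ x, f x * g x) - C₀ * N := by
    simp_rw [mul_sub]
    rw [Finset.sum_sub_distrib, ← Finset.sum_mul, hsumf]
    ring
  have e2 : ∑ x, (f x * Real.log (f x) + Real.exp (g x - C₀) - f x)
      = (∑ x, f x * Real.log (f x)) + (∑ x, Real.exp (g x - C₀)) - N := by
    rw [Finset.sum_sub_distrib, Finset.sum_add_distrib, hsumf]
  rw [e1, e2] at hsum
  -- Step E
  have hlog : Real.log (Real.cosh δ) ≤ δ ^ 2 / 2 := by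
    rw [Real.log_le_iff_le_exp (Real.cosh_pos δ)]
    exact Real.cosh_le_exp_half_sq δ
  have hfinal : N * ((Λ.card : ℝ) * δ ^ 2) ≤ (∑ x, f x * Real.log (f x)) + (Λ.card : ℝ) * (δ^2/2) * N := by
    have : C₀ * N ≤ (Λ.card : ℝ) * (δ^2/2) * N := by
      rw [hC₀]
      have : (Λ.card : ℝ) * Real.log (Real.cosh δ) ≤ (Λ.card : ℝ) * (δ^2/2) :=
        mul_le_mul_of_nonneg_left hlog (Nat.cast_nonneg _)
      exact mul_le_mul_of_nonneg_right this hN.le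
    linarith [hA2, hsum, h5]
  rw [show 2 * ((∑ x, f x * Real.log (f x)) / N) = 2 * (∑ x, f x * Real.log (f x)) / N from by ring,
    le_div_iff₀ hN]
  nlinarith [hfinal, hN]

/-- Chang's theorem. -/
theorem chang_theorem
    {G A : Type*} [Fintype G] [Nonempty G] [AddCommGroup A] [Fintype A] [DecidableEq A]
    (u : A → G → ℂ)
    (hmul : ∀ γ γ' x, u (γ + γ') x = u γ x * u γ' x)
    (hone : ∀ x, u 0 x = 1)
    (hconj : ∀ γ x, u (-γ) x = (starRingEnd ℂ) (u γ x))
    (hnorm : ∀ γ x, ‖u γ x‖ = 1)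
    (horth : ∀ γ : A, γ ≠ 0 → ∑ x, u γ x = 0)
    (f : G → ℝ) (hf0 : ∀ x, 0 ≤ f x)
    (hf1 : (∑ x, f x) / (Fintype.card G) = 1)
    (δ : ℝ) (hδ : 0 < δ) :
    ∃ Λ : Finset A,
      (Λ.card : ℝ) ≤ 4 * ((∑ x, f x * Real.log (f x)) / (Fintype.card G)) / δ ^ 2 ∧
      ∀ γ : A,
        ‖(∑ x, (f x : ℂ) * (starRingEnd ℂ) (u γ x)) / (Fintype.card G : ℂ)‖ > δ →
        ∃ ε : A → ℤ, (∀ lam, ε lam ∈ ({-1, 0, 1} : Set ℤ)) ∧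
          γ = ∑ lam ∈ Λ, ε lam • lam := by
  classical
  set N : ℝ := (Fintype.card G : ℝ) with hNdef
  have hN : (0:ℝ) < N := by
    have := Fintype.card_pos (α := G); rw [hNdef]; exact_mod_cast this
  set E : ℝ := (∑ x, f x * Real.log (f x)) / N with hE
  have hsumf : ∑ x, f x = N := by
    field_simp at hf1; linarith [hf1]
  have hE0 : 0 ≤ E := by
    have hpt : ∀ x : G, f x - 1 ≤ f x * Real.log (f x) := by
      intro x
      rcases eq_or_lt_of_le (hf0 x) with h | h
      · simp [← h]
      · have := Real.log_le_sub_one_of_pos (show (0:ℝ) < 1 / f x by positivity)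
        rw [Real.log_div one_ne_zero h.ne', Real.log_one] at this
        have h2 := mul_le_mul_of_nonneg_left this (hf0 x)
        have h3 : f x * (1 / f x) = 1 := by field_simp
        nlinarith
    have hsum := Finset.sum_le_sum fun x (_ : x ∈ (Finset.univ : Finset G)) => hpt x
    rw [Finset.sum_sub_distrib, hsumf, Finset.sum_const, Finset.card_univ] at hsum
    have : (0:ℝ) ≤ ∑ x, f x * Real.log (f x) := by
      simp only [nsmul_eq_mul, mul_one] at hsum
      rw [← hNdef] at hsum
      linarith
    exact div_nonneg this hN.le
  set Spec : Finset A := Finset.univ.filter fun γ =>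
    δ < ‖(∑ x, (f x : ℂ) * (starRingEnd ℂ) (u γ x)) / (Fintype.card G : ℂ)‖
    with hSpec
  set d₀ : ℕ := ⌊2 * E / δ ^ 2⌋₊ with hd₀
  have hbound : ∀ s' ⊆ Spec, AddDissociated (s' : Set A) → s'.card ≤ d₀ := by
    intro s' hs' hdis
    have hspec : ∀ γ ∈ s', δ <
        ‖(∑ x, (f x : ℂ) * (starRingEnd ℂ) (u γ x)) / (Fintype.card G : ℂ)‖ := by
      intro γ hγ
      have := hs' hγ
      rw [hSpec, Finset.mem_filter] at this
      exact this.2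
    have hcount := chang_count u hmul hone hconj hnorm horth f hf0 hf1 δ hδ s' hdis hspec
    rw [hd₀]
    refine Nat.le_floor ?_
    rw [le_div_iff₀ (by positivity : (0:ℝ) < δ ^ 2)]
    exact hcount
  obtain ⟨Λ, hΛsub, hΛcard, hΛspan⟩ :=
    Finset.exists_subset_addSpan_card_le_of_forall_addDissociated hbound
  refine ⟨Λ, ?_, ?_⟩
  · calc (Λ.card : ℝ) ≤ (d₀ : ℝ) := Nat.cast_le.2 hΛcard
      _ ≤ 2 * E / δ ^ 2 := Nat.floor_le (by positivity)
      _ ≤ 4 * E / δ ^ 2 := by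
          apply div_le_div_of_nonneg_right ?_ (by positivity)
          · linarith
  · intro γ hγ
    have hγS : γ ∈ Spec := by
      rw [hSpec, Finset.mem_filter]
      exact ⟨Finset.mem_univ _, hγ⟩
    have := hΛspan hγS
    rw [Finset.mem_addSpan] at this
    obtain ⟨ε, hε, hsum⟩ := this
    exact ⟨ε, fun lam => by simpa using hε lam, hsum.symm⟩
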